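/- Let V₂ be a finite set, m₂ > 0 a constant, and E₂ : V₂×V₂ → [0,∞) symmetric vanishing on the diagonal. The operator K on ℓ²(ℕ×V₂, m^f), where m^f(x,y) = eˣ·m₂, defined by (K f)(x,y) = e^{−x}·(1/m₂)·∑_{y'∈V₂} E₂(y,y')·(f(x,y) − f(x,y')), is a compact operator (i.e. the operator (1/m₁^f(·)) ⊗ Δ_{G₂} is compact on the funnel). -/

import Mathlib

noncomputable section

open Complex
open scoped ENNReal

/-- The standard (unweighted) `ℓ²` space over `V`. -/
abbrev L2 (V : Type*) := lp (fun _ : V => ℂ) 2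

/-- The isometry `ℓ²(V,m) → ℓ²(V)`, `f ↦ √m·f`. -/
def emb {V : Type*} (m : V → ℝ) (f : V → ℂ) : V → ℂ :=
  fun v => (Real.sqrt (m v) : ℂ) * f v

/-- The inverse isometry `ℓ²(V) → ℓ²(V,m)`, `g ↦ g/√m`. -/
def unemb {V : Type*} (m : V → ℝ) (g : V → ℂ) : V → ℂ :=
  fun v => g v / (Real.sqrt (m v) : ℂ)

/-- Weight of the funnel: `m^f(x,y) = eˣ·m₂`. -/
def mF (V₂ : Type*) (m₂ : ℝ) : ℕ × V₂ → ℝ := fun v => Real.exp v.1 * m₂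

/-- The operator `(1/m₁^f(·)) ⊗ Δ_{G₂}` on the funnel:
`(K f)(x,y) = e^{−x}·(1/m₂)·∑_{y'} E₂(y,y')·(f(x,y) − f(x,y'))`. -/
def Kop {V₂ : Type*} [Fintype V₂] (m₂ : ℝ) (E₂ : V₂ → V₂ → ℝ)
    (f : ℕ × V₂ → ℂ) : ℕ × V₂ → ℂ := fun v =>
  ((Real.exp (-(v.1 : ℝ)) : ℝ) : ℂ) * (1 / (m₂ : ℂ)) *
    ∑ y' : V₂, ((E₂ v.2 y' : ℝ) : ℂ) * (f (v.1, v.2) - f (v.1, y'))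

/-! ### Auxiliary lemmas -/

/-- An operator whose range lies in a finite-dimensional subspace is compact. -/
lemma isCompactOperator_of_mem_fd {H : Type*} [NormedAddCommGroup H] [NormedSpace ℂ H]
    (f : H →L[ℂ] H) (W : Submodule ℂ H) [FiniteDimensional ℂ W]
    (hf : ∀ x, f x ∈ W) : IsCompactOperator f := by
  haveI : ProperSpace W := FiniteDimensional.proper ℂ W
  rw [isCompactOperator_iff_exists_mem_nhds_image_subset_compact]
  refine ⟨Metric.closedBall 0 1, Metric.closedBall_mem_nhds 0 one_pos,
    Subtype.val '' Metric.closedBall (0 : W) ‖f‖, ?_, ?_⟩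
  · exact (isCompact_closedBall _ _).image continuous_subtype_val
  · rintro _ ⟨x, hx, rfl⟩
    refine ⟨⟨f x, hf x⟩, ?_, rfl⟩
    have hx1 : ‖x‖ ≤ 1 := by simpa [dist_zero_right] using hx
    have := f.unit_le_opNorm x hx1
    simpa [dist_zero_right, Submodule.norm_coe] using this

section Main

variable {V₂ : Type*} [Fintype V₂]

/-- The (cut-off) transported operator on `ℓ²(ℕ × V₂)`. -/
def Tf (m₂ : ℝ) (E₂ : V₂ → V₂ → ℝ) (P : ℕ → Prop) [DecidablePred P]
    (g : ℕ × V₂ → ℂ) : ℕ × V₂ → ℂ := fun v =>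
  if P v.1 then
    ((Real.exp (-(v.1 : ℝ)) : ℝ) : ℂ) * (1 / (m₂ : ℂ)) *
      ∑ y' : V₂, ((E₂ v.2 y' : ℝ) : ℂ) * (g (v.1, v.2) - g (v.1, y'))
  else 0

variable (m₂ : ℝ) (E₂ : V₂ → V₂ → ℝ)

/-- The constant in the fiberwise bound. -/
def C0 : ℝ := ((Fintype.card V₂ : ℝ) + 1) * (∑ y : V₂, ∑ y' : V₂, E₂ y y') / m₂

lemma hB_nonneg (hpos : ∀ y y', 0 ≤ E₂ y y') : 0 ≤ ∑ y : V₂, ∑ y' : V₂, E₂ y y' :=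
  Finset.sum_nonneg fun y _ => Finset.sum_nonneg fun y' _ => hpos y y'

lemma C0_nonneg (hm₂ : 0 < m₂) (hpos : ∀ y y', 0 ≤ E₂ y y') : 0 ≤ C0 m₂ E₂ :=
  div_nonneg (mul_nonneg (by positivity) (hB_nonneg E₂ hpos)) hm₂.le

lemma Tf_le (hm₂ : 0 < m₂) (hpos : ∀ y y', 0 ≤ E₂ y y')
    (P : ℕ → Prop) [DecidablePred P] {c : ℝ} (hc : 0 ≤ c)
    (hP : ∀ x : ℕ, P x → Real.exp (-(x : ℝ)) ≤ c) (g : ℕ × V₂ → ℂ) (v : ℕ × V₂) :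
    ‖Tf m₂ E₂ P g v‖ ≤ c * C0 m₂ E₂ * ∑ y' : V₂, ‖g (v.1, y')‖ := by
  set B := ∑ y : V₂, ∑ y' : V₂, E₂ y y' with hBdef
  have hB : 0 ≤ B := hB_nonneg E₂ hpos
  have hS : (0:ℝ) ≤ ∑ y' : V₂, ‖g (v.1, y')‖ :=
    Finset.sum_nonneg fun _ _ => norm_nonneg _
  unfold Tf
  split_ifs with hPv
  · have hEB : ∀ y y', E₂ y y' ≤ B := by
      intro y y'
      calc E₂ y y' ≤ ∑ y'' : V₂, E₂ y y'' :=
            Finset.single_le_sum (fun i _ => hpos y i) (Finset.mem_univ y')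
        _ ≤ B := Finset.single_le_sum
            (fun i _ => Finset.sum_nonneg fun j _ => hpos i j) (Finset.mem_univ y)
    have hgv : ‖g (v.1, v.2)‖ ≤ ∑ y' : V₂, ‖g (v.1, y')‖ :=
      Finset.single_le_sum (f := fun y' => ‖g (v.1, y')‖)
        (fun i _ => norm_nonneg _) (Finset.mem_univ v.2)
    have hsum : ‖∑ y' : V₂, ((E₂ v.2 y' : ℝ) : ℂ) * (g (v.1, v.2) - g (v.1, y'))‖
        ≤ ((Fintype.card V₂ : ℝ) + 1) * B * ∑ y' : V₂, ‖g (v.1, y')‖ := by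
      calc ‖∑ y' : V₂, ((E₂ v.2 y' : ℝ) : ℂ) * (g (v.1, v.2) - g (v.1, y'))‖
          ≤ ∑ y' : V₂, ‖((E₂ v.2 y' : ℝ) : ℂ) * (g (v.1, v.2) - g (v.1, y'))‖ :=
            norm_sum_le _ _
        _ ≤ ∑ y' : V₂, B * (‖g (v.1, v.2)‖ + ‖g (v.1, y')‖) := by
            refine Finset.sum_le_sum fun y' _ => ?_
            rw [norm_mul, Complex.norm_real, Real.norm_eq_abs,
              _root_.abs_of_nonneg (hpos v.2 y')]
            exact mul_le_mul (hEB _ _) (norm_sub_le _ _) (norm_nonneg _) hB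
        _ = B * ((Fintype.card V₂ : ℝ) * ‖g (v.1, v.2)‖ + ∑ y' : V₂, ‖g (v.1, y')‖) := by
            rw [← Finset.mul_sum, Finset.sum_add_distrib, Finset.sum_const,
              Finset.card_univ, nsmul_eq_mul]
        _ ≤ B * ((Fintype.card V₂ : ℝ) * (∑ y' : V₂, ‖g (v.1, y')‖)
              + ∑ y' : V₂, ‖g (v.1, y')‖) := by
            gcongr
        _ = ((Fintype.card V₂ : ℝ) + 1) * B * ∑ y' : V₂, ‖g (v.1, y')‖ := by ring
    have hnorm : ‖((Real.exp (-(v.1 : ℝ)) : ℝ) : ℂ) * (1 / (m₂ : ℂ)) *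
        ∑ y' : V₂, ((E₂ v.2 y' : ℝ) : ℂ) * (g (v.1, v.2) - g (v.1, y'))‖
        = Real.exp (-(v.1 : ℝ)) * (1 / m₂) *
          ‖∑ y' : V₂, ((E₂ v.2 y' : ℝ) : ℂ) * (g (v.1, v.2) - g (v.1, y'))‖ := by
      rw [norm_mul, norm_mul, Complex.norm_real, Real.norm_eq_abs,
        _root_.abs_of_pos (Real.exp_pos _), norm_div, norm_one, Complex.norm_real,
        Real.norm_eq_abs, _root_.abs_of_pos hm₂]
    rw [hnorm]
    calc Real.exp (-(v.1 : ℝ)) * (1 / m₂) *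
          ‖∑ y' : V₂, ((E₂ v.2 y' : ℝ) : ℂ) * (g (v.1, v.2) - g (v.1, y'))‖
        ≤ c * (1 / m₂) * (((Fintype.card V₂ : ℝ) + 1) * B * ∑ y' : V₂, ‖g (v.1, y')‖) := by
          have h1 : 0 ≤ (1:ℝ) / m₂ := by positivity
          exact mul_le_mul (mul_le_mul_of_nonneg_right (hP _ hPv) h1) hsum
            (norm_nonneg _) (by positivity)
      _ = c * C0 m₂ E₂ * ∑ y' : V₂, ‖g (v.1, y')‖ := by
          rw [C0, hBdef]; field_simp
  · simp only [norm_zero]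
    have := C0_nonneg m₂ E₂ hm₂ hpos
    positivity

/-- The master finite-sum bound. -/
lemma Tf_sum_le (hm₂ : 0 < m₂) (hpos : ∀ y y', 0 ≤ E₂ y y')
    (P : ℕ → Prop) [DecidablePred P] {c : ℝ} (hc : 0 ≤ c)
    (hP : ∀ x : ℕ, P x → Real.exp (-(x : ℝ)) ≤ c) (g : L2 (ℕ × V₂))
    (s : Finset (ℕ × V₂)) :
    ∑ v ∈ s, ‖Tf m₂ E₂ P (⇑g) v‖ ^ 2
      ≤ (c * C0 m₂ E₂ * (Fintype.card V₂ : ℝ) * ‖g‖) ^ 2 := by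
  have hC0 := C0_nonneg m₂ E₂ hm₂ hpos
  set n : ℝ := (Fintype.card V₂ : ℝ) with hn
  have hn0 : 0 ≤ n := by positivity
  set Q : ℕ → ℝ := fun x => ∑ y' : V₂, ‖g (x, y')‖ ^ 2 with hQ
  have hQ0 : ∀ x, 0 ≤ Q x := fun x => Finset.sum_nonneg fun _ _ => by positivity
  have step1 : ∀ v : ℕ × V₂, ‖Tf m₂ E₂ P (⇑g) v‖ ^ 2 ≤ (c * C0 m₂ E₂) ^ 2 * (n * Q v.1) := by
    intro v
    have h1 := Tf_le m₂ E₂ hm₂ hpos P hc hP (⇑g) v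
    have hS : (0:ℝ) ≤ ∑ y' : V₂, ‖g (v.1, y')‖ :=
      Finset.sum_nonneg fun _ _ => norm_nonneg _
    have h2 : ‖Tf m₂ E₂ P (⇑g) v‖ ^ 2 ≤ (c * C0 m₂ E₂ * ∑ y' : V₂, ‖g (v.1, y')‖) ^ 2 :=
      pow_le_pow_left₀ (norm_nonneg _) h1 2
    have h3 : (∑ y' : V₂, ‖g (v.1, y')‖) ^ 2 ≤ n * Q v.1 := by
      have := sq_sum_le_card_mul_sum_sq (s := (Finset.univ : Finset V₂))
        (f := fun y' => ‖g (v.1, y')‖)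
      simpa [hQ, Finset.card_univ] using this
    calc ‖Tf m₂ E₂ P (⇑g) v‖ ^ 2 ≤ (c * C0 m₂ E₂ * ∑ y' : V₂, ‖g (v.1, y')‖) ^ 2 := h2
      _ = (c * C0 m₂ E₂) ^ 2 * (∑ y' : V₂, ‖g (v.1, y')‖) ^ 2 := by ring
      _ ≤ (c * C0 m₂ E₂) ^ 2 * (n * Q v.1) := by
          have : (0:ℝ) ≤ (c * C0 m₂ E₂) ^ 2 := by positivity
          exact mul_le_mul_of_nonneg_left h3 this
  have step2 : ∑ v ∈ s, Q v.1 ≤ n * ‖g‖ ^ 2 := by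
    have hsub : s ⊆ (s.image Prod.fst) ×ˢ (Finset.univ : Finset V₂) := by
      intro v hv
      rw [Finset.mem_product]
      exact ⟨Finset.mem_image_of_mem _ hv, Finset.mem_univ _⟩
    calc ∑ v ∈ s, Q v.1
        ≤ ∑ v ∈ (s.image Prod.fst) ×ˢ (Finset.univ : Finset V₂), Q v.1 :=
          Finset.sum_le_sum_of_subset_of_nonneg hsub (fun v _ _ => hQ0 v.1)
      _ = ∑ x ∈ s.image Prod.fst, ∑ _y : V₂, Q x := by
          rw [Finset.sum_product]
      _ = n * ∑ x ∈ s.image Prod.fst, Q x := by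
          simp [Finset.sum_const, Finset.card_univ, Finset.mul_sum, mul_comm, hn]
      _ ≤ n * ‖g‖ ^ 2 := by
          refine mul_le_mul_of_nonneg_left ?_ hn0
          have key : ∑ v ∈ (s.image Prod.fst) ×ˢ (Finset.univ : Finset V₂), ‖g v‖ ^ 2
              ≤ ‖g‖ ^ 2 := by
            have := lp.sum_rpow_le_norm_rpow (p := 2) (by norm_num) g
              ((s.image Prod.fst) ×ˢ (Finset.univ : Finset V₂))
            have h2 : ((2:ℝ≥0∞)).toReal = (2:ℝ) := by norm_num
            rw [h2] at this
            calc ∑ v ∈ (s.image Prod.fst) ×ˢ (Finset.univ : Finset V₂), ‖g v‖ ^ 2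
                = ∑ v ∈ (s.image Prod.fst) ×ˢ (Finset.univ : Finset V₂), ‖g v‖ ^ (2:ℝ) := by
                  refine Finset.sum_congr rfl fun v _ => ?_
                  rw [← Real.rpow_natCast ‖g v‖ 2]; norm_num
              _ ≤ ‖g‖ ^ (2:ℝ) := this
              _ = ‖g‖ ^ 2 := by rw [← Real.rpow_natCast ‖g‖ 2]; norm_num
          calc ∑ x ∈ s.image Prod.fst, Q x
              = ∑ v ∈ (s.image Prod.fst) ×ˢ (Finset.univ : Finset V₂), ‖g v‖ ^ 2 := by
                rw [Finset.sum_product]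
            _ ≤ ‖g‖ ^ 2 := key
  calc ∑ v ∈ s, ‖Tf m₂ E₂ P (⇑g) v‖ ^ 2
      ≤ ∑ v ∈ s, (c * C0 m₂ E₂) ^ 2 * (n * Q v.1) :=
        Finset.sum_le_sum fun v _ => step1 v
    _ = (c * C0 m₂ E₂) ^ 2 * n * ∑ v ∈ s, Q v.1 := by
        rw [Finset.mul_sum]; exact Finset.sum_congr rfl fun v _ => by ring
    _ ≤ (c * C0 m₂ E₂) ^ 2 * n * (n * ‖g‖ ^ 2) := by
        have : (0:ℝ) ≤ (c * C0 m₂ E₂) ^ 2 * n := by positivity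
        exact mul_le_mul_of_nonneg_left step2 this
    _ = (c * C0 m₂ E₂ * n * ‖g‖) ^ 2 := by ring

lemma Tf_sum_le' (hm₂ : 0 < m₂) (hpos : ∀ y y', 0 ≤ E₂ y y')
    (P : ℕ → Prop) [DecidablePred P] {c : ℝ} (hc : 0 ≤ c)
    (hP : ∀ x : ℕ, P x → Real.exp (-(x : ℝ)) ≤ c) (g : L2 (ℕ × V₂))
    (s : Finset (ℕ × V₂)) :
    ∑ v ∈ s, ‖Tf m₂ E₂ P (⇑g) v‖ ^ ((2:ℝ≥0∞)).toReal
      ≤ (c * C0 m₂ E₂ * (Fintype.card V₂ : ℝ) * ‖g‖) ^ ((2:ℝ≥0∞)).toReal := by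
  have h2 : ((2:ℝ≥0∞)).toReal = (2:ℝ) := by norm_num
  rw [h2]
  have := Tf_sum_le m₂ E₂ hm₂ hpos P hc hP g s
  have conv : ∀ r : ℝ, 0 ≤ r → r ^ (2:ℝ) = r ^ (2:ℕ) := by
    intro r hr
    rw [← Real.rpow_natCast r 2]; norm_num
  calc ∑ v ∈ s, ‖Tf m₂ E₂ P (⇑g) v‖ ^ (2:ℝ)
      = ∑ v ∈ s, ‖Tf m₂ E₂ P (⇑g) v‖ ^ (2:ℕ) :=
        Finset.sum_congr rfl fun v _ => conv _ (norm_nonneg _)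
    _ ≤ (c * C0 m₂ E₂ * (Fintype.card V₂ : ℝ) * ‖g‖) ^ (2:ℕ) := this
    _ = (c * C0 m₂ E₂ * (Fintype.card V₂ : ℝ) * ‖g‖) ^ (2:ℝ) := by
        rw [conv]
        have hC0 := C0_nonneg m₂ E₂ hm₂ hpos
        positivity

lemma Tf_memℓp (hm₂ : 0 < m₂) (hpos : ∀ y y', 0 ≤ E₂ y y')
    (P : ℕ → Prop) [DecidablePred P] (g : L2 (ℕ × V₂)) :
    Memℓp (Tf m₂ E₂ P (⇑g)) 2 :=
  memℓp_gen' (Tf_sum_le' m₂ E₂ hm₂ hpos P (c := 1) zero_le_one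
    (fun x _ => Real.exp_le_one_iff.2 (neg_nonpos.2 (Nat.cast_nonneg x))) g)

/-- The cut-off operator as a continuous linear map. -/
def TfL (hm₂ : 0 < m₂) (hpos : ∀ y y', 0 ≤ E₂ y y')
    (P : ℕ → Prop) [DecidablePred P] : L2 (ℕ × V₂) →L[ℂ] L2 (ℕ × V₂) :=
  LinearMap.mkContinuous
    { toFun := fun g => (⟨Tf m₂ E₂ P (⇑g), Tf_memℓp m₂ E₂ hm₂ hpos P g⟩ : L2 (ℕ × V₂))
      map_add' := by
        intro g h
        apply lp.ext
        funext v
        change Tf m₂ E₂ P (⇑(g + h)) v = Tf m₂ E₂ P (⇑g) v + Tf m₂ E₂ P (⇑h) v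
        rw [lp.coeFn_add]
        simp only [Tf, Pi.add_apply]
        split_ifs with hPv
        · rw [← mul_add, ← Finset.sum_add_distrib]
          congr 1
          refine Finset.sum_congr rfl fun y' _ => ?_
          ring
        · rw [add_zero]
      map_smul' := by
        intro a g
        apply lp.ext
        funext v
        change Tf m₂ E₂ P (⇑(a • g)) v = a * Tf m₂ E₂ P (⇑g) v
        rw [lp.coeFn_smul]
        simp only [Tf, Pi.smul_apply, smul_eq_mul]
        split_ifs with hPv
        · have hsum : ∑ y' : V₂, ((E₂ v.2 y' : ℝ) : ℂ) *
              (a * (⇑g) (v.1, v.2) - a * (⇑g) (v.1, y'))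
              = a * ∑ y' : V₂, ((E₂ v.2 y' : ℝ) : ℂ) * ((⇑g) (v.1, v.2) - (⇑g) (v.1, y')) := by
            rw [Finset.mul_sum]
            exact Finset.sum_congr rfl fun y' _ => by ring
          rw [hsum]
          ring
        · rw [mul_zero] }
    (C0 m₂ E₂ * (Fintype.card V₂ : ℝ))
    (by
      intro g
      simp only [LinearMap.coe_mk, AddHom.coe_mk]
      have hC0 := C0_nonneg m₂ E₂ hm₂ hpos
      refine lp.norm_le_of_forall_sum_le (by norm_num) (by positivity) ?_
      intro s
      have := Tf_sum_le' m₂ E₂ hm₂ hpos P (c := 1) zero_le_one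
        (fun x _ => Real.exp_le_one_iff.2 (neg_nonpos.2 (Nat.cast_nonneg x))) g s
      simpa [one_mul, mul_assoc] using this)

lemma TfL_coe (hm₂ : 0 < m₂) (hpos : ∀ y y', 0 ≤ E₂ y y')
    (P : ℕ → Prop) [DecidablePred P] (g : L2 (ℕ × V₂)) :
    ⇑(TfL m₂ E₂ hm₂ hpos P g) = Tf m₂ E₂ P (⇑g) := rfl

end Main

/-! ### The main theorem -/

/-- **Compactness of `(1/m₁^f(·)) ⊗ Δ_{G₂}` on the funnel `ℓ²(ℕ×V₂, m^f)`:**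
there is a compact operator on `ℓ²` agreeing with it (transported by the unitary
`f ↦ √(m^f)·f`) on all finitely supported elements. -/
theorem stmt8 {V₂ : Type*} [Fintype V₂] (m₂ : ℝ) (hm₂ : 0 < m₂)
    (E₂ : V₂ → V₂ → ℝ) (hsym : ∀ y y', E₂ y y' = E₂ y' y)
    (hpos : ∀ y y', 0 ≤ E₂ y y') (hdiag : ∀ y, E₂ y y = 0) :
    ∃ T : L2 (ℕ × V₂) →L[ℂ] L2 (ℕ × V₂),
      IsCompactOperator T ∧
      ∀ g : L2 (ℕ × V₂), (Function.support (g : ℕ × V₂ → ℂ)).Finite →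
        ((T g : ℕ × V₂ → ℂ)
          = emb (mF V₂ m₂) (Kop m₂ E₂ (unemb (mF V₂ m₂) g))) := by
  classical
  set T : L2 (ℕ × V₂) →L[ℂ] L2 (ℕ × V₂) := TfL m₂ E₂ hm₂ hpos (fun _ => True) with hT
  set TN : ℕ → (L2 (ℕ × V₂) →L[ℂ] L2 (ℕ × V₂)) :=
    fun N => TfL m₂ E₂ hm₂ hpos (fun x => x ≤ N) with hTN
  have hC0 := C0_nonneg m₂ E₂ hm₂ hpos
  refine ⟨T, ?_, ?_⟩
  · -- compactness
    -- each TN N is compact (finite-dimensional range)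
    have hcompN : ∀ N, IsCompactOperator (TN N) := by
      intro N
      -- the submodule of elements supported on {v | v.1 ≤ N}
      set W : Submodule ℂ (L2 (ℕ × V₂)) :=
        { carrier := {f : L2 (ℕ × V₂) | ∀ v : ℕ × V₂, N < v.1 → f v = 0}
          add_mem' := by
            intro a b ha hb v hv
            rw [lp.coeFn_add, Pi.add_apply, ha v hv, hb v hv, add_zero]
          zero_mem' := by intro v _; rw [lp.coeFn_zero, Pi.zero_apply]
          smul_mem' := by
            intro a f hf v hv
            rw [lp.coeFn_smul, Pi.smul_apply, hf v hv, smul_zero] } with hW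
      haveI hWfd : FiniteDimensional ℂ W := by
        let R : W →ₗ[ℂ] ((Fin (N + 1) × V₂) → ℂ) :=
          { toFun := fun f => fun i => (f : L2 (ℕ × V₂)) ((i.1 : ℕ), i.2)
            map_add' := by
              intro a b; funext i
              simp [lp.coeFn_add]
            map_smul' := by
              intro a b; funext i
              simp [lp.coeFn_smul] }
        have hinj : Function.Injective R := by
          intro a b hab
          apply Subtype.ext
          apply lp.ext
          funext v
          by_cases hv : N < v.1
          · rw [a.2 v hv, b.2 v hv]
          · push_neg at hv
            have h1 := congrFun hab ((⟨v.1, Nat.lt_succ_of_le hv⟩ : Fin (N + 1)), v.2)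
            simpa [R] using h1
        exact FiniteDimensional.of_injective R hinj
      refine isCompactOperator_of_mem_fd (TN N) W ?_
      intro g v hv
      rw [hTN, TfL_coe]
      unfold Tf
      rw [if_neg (by omega)]
    -- T is the limit of TN in operator norm
    have hbound : ∀ N : ℕ, ‖TN N - T‖ ≤ Real.exp (-(N : ℝ)) * C0 m₂ E₂ * (Fintype.card V₂ : ℝ) := by
      intro N
      have hcN : (0:ℝ) ≤ Real.exp (-(N:ℝ)) := (Real.exp_pos _).le
      refine ContinuousLinearMap.opNorm_le_bound _ (by positivity) ?_
      intro g
      rw [ContinuousLinearMap.sub_apply]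
      -- the difference coerces to Tf with cut-off N < x
      have hdiff : ⇑(TN N g - T g) = - Tf m₂ E₂ (fun x => N < x) (⇑g) := by
        rw [lp.coeFn_sub, hTN, hT, TfL_coe, TfL_coe]
        funext v
        simp only [Pi.sub_apply, Pi.neg_apply, Tf]
        by_cases hv : v.1 ≤ N
        · rw [if_pos hv, if_pos trivial, if_neg (by omega), sub_self, neg_zero]
        · rw [if_neg hv, if_pos trivial, if_pos (by omega), zero_sub]
      have hnn : ‖TN N g - T g‖ ≤ (Real.exp (-(N:ℝ)) * C0 m₂ E₂ * (Fintype.card V₂ : ℝ)) * ‖g‖ := by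
        refine lp.norm_le_of_forall_sum_le (by norm_num) (by positivity) ?_
        intro s
        have hPt : ∀ x : ℕ, N < x → Real.exp (-(x:ℝ)) ≤ Real.exp (-(N:ℝ)) := by
          intro x hx
          apply Real.exp_le_exp.2
          have : (N:ℝ) ≤ (x:ℝ) := by exact_mod_cast hx.le
          linarith
        have := Tf_sum_le' m₂ E₂ hm₂ hpos (fun x => N < x) hcN hPt g s
        calc ∑ v ∈ s, ‖(TN N g - T g) v‖ ^ ((2:ℝ≥0∞)).toReal
            = ∑ v ∈ s, ‖Tf m₂ E₂ (fun x => N < x) (⇑g) v‖ ^ ((2:ℝ≥0∞)).toReal := by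
              refine Finset.sum_congr rfl fun v _ => ?_
              rw [hdiff]; simp
          _ ≤ (Real.exp (-(N:ℝ)) * C0 m₂ E₂ * (Fintype.card V₂ : ℝ) * ‖g‖) ^ ((2:ℝ≥0∞)).toReal := this
      exact hnn
    have htendsto : Filter.Tendsto TN Filter.atTop (nhds T) := by
      rw [tendsto_iff_norm_sub_tendsto_zero]
      have hub : Filter.Tendsto
          (fun N : ℕ => Real.exp (-(N:ℝ)) * C0 m₂ E₂ * (Fintype.card V₂ : ℝ))
          Filter.atTop (nhds 0) := by
        have h1 : Filter.Tendsto (fun N : ℕ => Real.exp (-(N:ℝ))) Filter.atTop (nhds 0) :=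
          Real.tendsto_exp_neg_atTop_nhds_zero.comp tendsto_natCast_atTop_atTop
        have := (h1.mul_const (C0 m₂ E₂)).mul_const ((Fintype.card V₂ : ℝ))
        simpa using this
      refine squeeze_zero (fun N => norm_nonneg _) hbound hub
    exact isCompactOperator_of_tendsto htendsto
      (Filter.Eventually.of_forall hcompN)
  · -- identification
    intro g _
    rw [hT, TfL_coe]
    funext v
    obtain ⟨x, y⟩ := v
    simp only [Tf, if_pos trivial, emb, unemb, Kop, mF]
    have h0 : (0:ℝ) < Real.exp (x:ℝ) * m₂ := mul_pos (Real.exp_pos _) hm₂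
    set r : ℝ := Real.sqrt (Real.exp (x:ℝ) * m₂) with hrdef
    have hr0 : (0:ℝ) < r := Real.sqrt_pos.2 h0
    have hr : (r : ℂ) ≠ 0 := by
      simpa using Complex.ofReal_ne_zero.2 hr0.ne'
    have hterm : ∀ y' : V₂,
        ((E₂ y y' : ℝ) : ℂ) * (g (x, y) / (r:ℂ) - g (x, y') / (r:ℂ))
          = (((E₂ y y' : ℝ) : ℂ) * (g (x, y) - g (x, y'))) / (r:ℂ) := by
      intro y'
      field_simp
    rw [Finset.sum_congr rfl fun y' _ => hterm y', ← Finset.sum_div]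
    conv_rhs => rw [mul_comm, mul_assoc, div_mul_cancel₀ _ hr]
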